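/- Let α_1, ..., α_m and β_1, ..., β_m be real coefficients of an exponential sum with accuracy ε > 0 over the interval [1, R], i.e., |1/x − Σ_{j=1}^m α_j e^{−β_j x}| ≤ ε for all x ∈ [1, R]. Let A be a diagonalizable complex matrix, A = V D V^{-1} with D diagonal and V invertible, whose eigenvalues are all real and contained in [1, R]. Then ‖A^{-1} − Σ_{j=1}^m α_j exp(−β_j A)‖_2 ≤ C ε, where C = ‖V‖_2 · ‖V^{-1}‖_2 and ‖·‖_2 denotes the spectral norm. In particular, if A is normal then C = 1. -/

import Mathlib

open scoped Matrix

open scoped ENNReal NNReal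

/-- The spectral norm of a complex square matrix: the operator norm induced by
the Euclidean vector norm. -/
noncomputable def specNorm {n : Type*} [Fintype n] [DecidableEq n] (A : Matrix n n ℂ) : ℝ :=
  ‖Matrix.toEuclideanCLM (𝕜 := ℂ) A‖

section ExpSumAux

open NormedSpace

variable {N : ℕ}

private lemma specNorm_nonneg' (X : Matrix (Fin N) (Fin N) ℂ) : 0 ≤ specNorm X := norm_nonneg _

private lemma specNorm_mul_le' (X Y : Matrix (Fin N) (Fin N) ℂ) :
    specNorm (X * Y) ≤ specNorm X * specNorm Y := by
  unfold specNorm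
  rw [map_mul]
  exact norm_mul_le _ _

private lemma specNorm_diagonal_le' {d : Fin N → ℂ} {c : ℝ} (hc : 0 ≤ c) (h : ∀ i, ‖d i‖ ≤ c) :
    specNorm (Matrix.diagonal d) ≤ c := by
  unfold specNorm
  refine ContinuousLinearMap.opNorm_le_bound _ hc fun x => ?_
  have hx : ∀ i, (Matrix.toEuclideanCLM (𝕜 := ℂ) (Matrix.diagonal d) x) i = d i * x i := by
    intro i
    have h0 : (Matrix.toEuclideanCLM (𝕜 := ℂ) (Matrix.diagonal d)) x =
        (WithLp.equiv 2 _).symm ((Matrix.diagonal d).toLin'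
          ((WithLp.equiv 2 (Fin N → ℂ)) x)) := rfl
    rw [h0]
    simp [Matrix.toLin'_apply, Matrix.mulVec_diagonal]
  rw [EuclideanSpace.norm_eq, EuclideanSpace.norm_eq]
  have hterm : ∀ i, ‖(Matrix.toEuclideanCLM (𝕜 := ℂ) (Matrix.diagonal d) x) i‖ ^ 2
      ≤ c ^ 2 * ‖x i‖ ^ 2 := by
    intro i
    rw [hx i, norm_mul, mul_pow]
    exact mul_le_mul_of_nonneg_right (pow_le_pow_left₀ (norm_nonneg _) (h i) 2)
      (by positivity)
  calc Real.sqrt (∑ i, ‖(Matrix.toEuclideanCLM (𝕜 := ℂ) (Matrix.diagonal d) x) i‖ ^ 2)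
      ≤ Real.sqrt (∑ i, c ^ 2 * ‖x i‖ ^ 2) :=
        Real.sqrt_le_sqrt (Finset.sum_le_sum fun i _ => hterm i)
    _ = Real.sqrt (c ^ 2 * ∑ i, ‖x i‖ ^ 2) := by rw [Finset.mul_sum]
    _ = c * Real.sqrt (∑ i, ‖x i‖ ^ 2) := by
        rw [Real.sqrt_mul (by positivity), Real.sqrt_sq hc]

private lemma commute_nonsing_inv_right' {X A : Matrix (Fin N) (Fin N) ℂ} (hA : IsUnit A.det)
    (h : Commute X A) : Commute X A⁻¹ := by
  show X * A⁻¹ = A⁻¹ * X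
  calc X * A⁻¹ = (A⁻¹ * A) * X * A⁻¹ := by rw [Matrix.nonsing_inv_mul _ hA, one_mul]
    _ = A⁻¹ * (A * X * A⁻¹) := by simp only [mul_assoc]
    _ = A⁻¹ * (X * A * A⁻¹) := by rw [← h.eq]
    _ = A⁻¹ * X := by rw [mul_assoc, Matrix.mul_nonsing_inv _ hA, mul_one]

private lemma commute_nonsing_inv_left' {X A : Matrix (Fin N) (Fin N) ℂ} (hX : IsUnit X.det)
    (h : Commute X A) : Commute X⁻¹ A :=
  (commute_nonsing_inv_right' hX h.symm).symm

private lemma diagonal_sum' {ι : Type*} (s : Finset ι) (f : ι → (Fin N → ℂ)) :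
    Matrix.diagonal (∑ j ∈ s, f j) = ∑ j ∈ s, Matrix.diagonal (f j) :=
  map_sum (Matrix.diagonalAddMonoidHom (Fin N) ℂ) f s

/-- The star algebra equivalence `Matrix.toEuclideanCLM` as an algebra equivalence. -/
private noncomputable def toEucAlgEquiv (N : ℕ) :
    Matrix (Fin N) (Fin N) ℂ ≃ₐ[ℂ] (EuclideanSpace ℂ (Fin N) →L[ℂ] EuclideanSpace ℂ (Fin N)) :=
  AlgEquiv.ofRingEquiv (f := (Matrix.toEuclideanCLM (𝕜 := ℂ) (n := Fin N)).toRingEquiv)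
    (fun r => by
      simp only [Algebra.algebraMap_eq_smul_one]
      rw [StarAlgEquiv.toRingEquiv_eq_coe]
      show Matrix.toEuclideanCLM (𝕜 := ℂ) (r • (1 : Matrix (Fin N) (Fin N) ℂ)) = _
      rw [map_smul, map_one])

end ExpSumAux

open NormedSpace in
/-- If `α j, β j` are the coefficients of an exponential sum of accuracy `ε`
on `[1, R]`, i.e. `|1/x − ∑ j α j e^{−β j x}| ≤ ε` for all `x ∈ [1, R]`, and if
`A = V * D * V⁻¹` is diagonalizable with all eigenvalues real and contained in `[1, R]`, then
`‖A⁻¹ − ∑ j α j exp(−β j A)‖₂ ≤ C ε` with `C = ‖V‖₂ ‖V⁻¹‖₂`; in particular, if `A` is normal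
then the bound holds with `C = 1`. -/
theorem expSum_inverse_error {N m : ℕ} (α β : Fin m → ℝ) (ε R : ℝ) (hε : 0 < ε)
    (hacc : ∀ x ∈ Set.Icc (1 : ℝ) R,
      |1 / x - ∑ j, α j * Real.exp (-(β j) * x)| ≤ ε)
    (A V D : Matrix (Fin N) (Fin N) ℂ)
    (hD : D.IsDiag) (hV : IsUnit V.det) (hA : A = V * D * V⁻¹)
    (hspec : ∀ i, ∃ x : ℝ, D i i = (x : ℂ) ∧ x ∈ Set.Icc (1 : ℝ) R) :
    specNorm (A⁻¹ - ∑ j, (α j : ℂ) • NormedSpace.exp ((-(β j : ℂ)) • A)) ≤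
        (specNorm V * specNorm V⁻¹) * ε ∧
      (IsStarNormal A →
        specNorm (A⁻¹ - ∑ j, (α j : ℂ) • NormedSpace.exp ((-(β j : ℂ)) • A)) ≤ ε) := by
  classical
  choose d hd using hspec
  have hVunit : IsUnit V := (Matrix.isUnit_iff_isUnit_det V).mpr hV
  have hd1 : ∀ i, 1 ≤ d i := fun i => (hd i).2.1
  have hdR : ∀ i, d i ≤ R := fun i => (hd i).2.2
  have hd0 : ∀ i, d i ≠ 0 := fun i => ne_of_gt (by linarith [hd1 i])
  set dC : Fin N → ℂ := fun i => (d i : ℂ) with hdC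
  have hdC0 : ∀ i, dC i ≠ 0 := fun i => by
    simp only [hdC, ne_eq, Complex.ofReal_eq_zero]
    exact hd0 i
  have hDdiag : D = Matrix.diagonal dC := by
    have hdiag : D.diag = dC := funext fun i => (hd i).1
    rw [← hD.diagonal_diag, hdiag]
  have hVV : V * V⁻¹ = 1 := Matrix.mul_nonsing_inv V hV
  have hV'V : V⁻¹ * V = 1 := Matrix.nonsing_inv_mul V hV
  have hconj : ∀ X Y : Matrix (Fin N) (Fin N) ℂ,
      (V * X * V⁻¹) * (V * Y * V⁻¹) = V * (X * Y) * V⁻¹ := by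
    intro X Y
    calc (V * X * V⁻¹) * (V * Y * V⁻¹)
        = V * (X * ((V⁻¹ * V) * (Y * V⁻¹))) := by simp only [mul_assoc]
      _ = V * (X * Y) * V⁻¹ := by rw [hV'V, one_mul]; simp only [mul_assoc]
  have hAinv : A⁻¹ = V * Matrix.diagonal (fun i => (dC i)⁻¹) * V⁻¹ := by
    apply Matrix.inv_eq_right_inv
    have h1 : (fun i => dC i * (dC i)⁻¹) = fun _ => (1 : ℂ) := by
      funext i
      exact mul_inv_cancel₀ (hdC0 i)
    rw [hA, hDdiag, hconj, Matrix.diagonal_mul_diagonal, h1, Matrix.diagonal_one, mul_one, hVV]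
  have hexp : ∀ j, exp ((-(β j : ℂ)) • A)
      = V * Matrix.diagonal (fun i => ((Real.exp (-(β j) * d i) : ℝ) : ℂ)) * V⁻¹ := by
    intro j
    rw [hA, hDdiag]
    have h1 : (-(β j : ℂ)) • (V * Matrix.diagonal dC * V⁻¹)
        = V * Matrix.diagonal (fun i => (-(β j : ℂ)) * dC i) * V⁻¹ := by
      have h0 : Matrix.diagonal (fun i => (-(β j : ℂ)) * dC i)
          = (-(β j : ℂ)) • Matrix.diagonal dC := by
        rw [← Matrix.diagonal_smul]
        congr 1
      rw [h0, mul_smul_comm, smul_mul_assoc]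
    have h3 : (exp fun i => (-(β j : ℂ)) * dC i)
        = fun i => ((Real.exp (-(β j) * d i) : ℝ) : ℂ) := by
      rw [Pi.exp_def]
      funext i
      have h2 : (-(β j : ℂ)) * dC i = ((-(β j) * d i : ℝ) : ℂ) := by
        simp only [hdC]
        push_cast
        ring
      rw [h2, ← Complex.exp_eq_exp_ℂ]
      exact (Complex.ofReal_exp _).symm
    rw [h1, Matrix.exp_conj V _ hVunit, Matrix.exp_diagonal, h3]
  set g : Fin N → ℝ := fun i => 1 / d i - ∑ j, α j * Real.exp (-(β j) * d i) with hg
  set gC : Fin N → ℂ := fun i => ((g i : ℝ) : ℂ) with hgC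
  have hgbound : ∀ i, ‖gC i‖ ≤ ε := by
    intro i
    simp only [hgC, Complex.norm_real, Real.norm_eq_abs]
    exact hacc (d i) ⟨hd1 i, hdR i⟩
  have hkey : A⁻¹ - ∑ j, (α j : ℂ) • exp ((-(β j : ℂ)) • A)
      = V * Matrix.diagonal gC * V⁻¹ := by
    have hsum : ∑ j, (α j : ℂ) • exp ((-(β j : ℂ)) • A)
        = V * Matrix.diagonal
            (fun i => ∑ j, (α j : ℂ) * ((Real.exp (-(β j) * d i) : ℝ) : ℂ)) * V⁻¹ := by
      have h2 : ∀ j, (α j : ℂ) • exp ((-(β j : ℂ)) • A)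
          = V * Matrix.diagonal
              (fun i => (α j : ℂ) * ((Real.exp (-(β j) * d i) : ℝ) : ℂ)) * V⁻¹ := by
        intro j
        rw [hexp j]
        have h0 : Matrix.diagonal (fun i => (α j : ℂ) * ((Real.exp (-(β j) * d i) : ℝ) : ℂ))
            = (α j : ℂ) • Matrix.diagonal (fun i => ((Real.exp (-(β j) * d i) : ℝ) : ℂ)) := by
          rw [← Matrix.diagonal_smul]
          congr 1
        rw [h0, mul_smul_comm, smul_mul_assoc]
      rw [Finset.sum_congr rfl fun j _ => h2 j, ← Finset.sum_mul, ← Finset.mul_sum]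
      congr 2
      rw [show (fun i => ∑ j, (α j : ℂ) * ((Real.exp (-(β j) * d i) : ℝ) : ℂ))
          = ∑ j, (fun i => (α j : ℂ) * ((Real.exp (-(β j) * d i) : ℝ) : ℂ)) from by
        funext i; simp,
        diagonal_sum']
    have h3 : Matrix.diagonal gC = Matrix.diagonal (fun i => (dC i)⁻¹)
        - Matrix.diagonal (fun i => ∑ j, (α j : ℂ) * ((Real.exp (-(β j) * d i) : ℝ) : ℂ)) := by
      have hgfun : gC = fun i => (dC i)⁻¹
          - ∑ j, (α j : ℂ) * ((Real.exp (-(β j) * d i) : ℝ) : ℂ) := by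
        funext i
        simp only [hgC, hg, hdC]
        push_cast
        rw [one_div]
      rw [hgfun, ← Matrix.diagonal_sub]
    rw [hAinv, hsum, h3, mul_sub, sub_mul]
  have part1 : specNorm (A⁻¹ - ∑ j, (α j : ℂ) • exp ((-(β j : ℂ)) • A)) ≤
      (specNorm V * specNorm V⁻¹) * ε := by
    rw [hkey]
    calc specNorm (V * Matrix.diagonal gC * V⁻¹)
        ≤ specNorm (V * Matrix.diagonal gC) * specNorm V⁻¹ := specNorm_mul_le' _ _
      _ ≤ (specNorm V * specNorm (Matrix.diagonal gC)) * specNorm V⁻¹ :=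
          mul_le_mul_of_nonneg_right (specNorm_mul_le' _ _) (specNorm_nonneg' _)
      _ ≤ (specNorm V * ε) * specNorm V⁻¹ :=
          mul_le_mul_of_nonneg_right
            (mul_le_mul_of_nonneg_left (specNorm_diagonal_le' hε.le hgbound)
              (specNorm_nonneg' _)) (specNorm_nonneg' _)
      _ = (specNorm V * specNorm V⁻¹) * ε := by ring
  refine ⟨part1, fun hNormal => ?_⟩
  -- Part 2: normal case
  have hAdet : IsUnit A.det := by
    rw [hA, Matrix.det_conj hVunit, hDdiag, Matrix.det_diagonal]
    exact isUnit_iff_ne_zero.mpr (Finset.prod_ne_zero_iff.mpr fun i _ => hdC0 i)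
  have hSdet : IsUnit (star A).det := by
    rw [Matrix.star_eq_conjTranspose, Matrix.det_conjTranspose]
    exact hAdet.star
  have hc1 : Commute (star A) A := hNormal.star_comm_self
  have hstarexp : ∀ j, star (exp ((-(β j : ℂ)) • A)) = exp ((-(β j : ℂ)) • star A) := by
    intro j
    rw [Matrix.star_eq_conjTranspose, Matrix.star_eq_conjTranspose,
      ← Matrix.exp_conjTranspose]
    congr 1
    rw [Matrix.conjTranspose_smul]
    congr 1
    simp [Complex.star_def, map_neg, Complex.conj_ofReal]
  have hstarE : star (A⁻¹ - ∑ j, (α j : ℂ) • exp ((-(β j : ℂ)) • A))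
      = (star A)⁻¹ - ∑ j, (α j : ℂ) • exp ((-(β j : ℂ)) • star A) := by
    rw [star_sub, star_sum]
    congr 1
    · rw [Matrix.star_eq_conjTranspose, Matrix.star_eq_conjTranspose,
        Matrix.conjTranspose_nonsing_inv]
    · refine Finset.sum_congr rfl fun j _ => ?_
      rw [star_smul, hstarexp j, Complex.star_def, Complex.conj_ofReal]
  have hSA_inv : Commute ((star A)⁻¹) A := commute_nonsing_inv_left' hSdet hc1
  have hS_Ainv : Commute (star A) A⁻¹ := commute_nonsing_inv_right' hAdet hc1
  have hSinv_Ainv : Commute ((star A)⁻¹) A⁻¹ := commute_nonsing_inv_right' hAdet hSA_inv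
  have hE : Commute (star (A⁻¹ - ∑ j, (α j : ℂ) • exp ((-(β j : ℂ)) • A)))
      (A⁻¹ - ∑ j, (α j : ℂ) • exp ((-(β j : ℂ)) • A)) := by
    rw [hstarE]
    refine Commute.sub_left (Commute.sub_right hSinv_Ainv ?_) (Commute.sub_right ?_ ?_)
    · exact Commute.sum_right _ _ _ fun j _ =>
        ((hSA_inv.smul_right _).exp_right).smul_right _
    · exact Commute.sum_left _ _ _ fun j _ =>
        (((hS_Ainv.smul_left _).exp_left).smul_left _)
    · refine Commute.sum_left _ _ _ fun j _ => ?_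
      refine Commute.sum_right _ _ _ fun k _ => ?_
      exact ((((hc1.smul_left _).smul_right _).exp).smul_left _).smul_right _
  set E := A⁻¹ - ∑ j, (α j : ℂ) • exp ((-(β j : ℂ)) • A) with hEdef
  have heN : Commute (star (Matrix.toEuclideanCLM (𝕜 := ℂ) E))
      (Matrix.toEuclideanCLM (𝕜 := ℂ) E) := by
    have h := hE.map (Matrix.toEuclideanCLM (𝕜 := ℂ) (n := Fin N))
    rwa [map_star] at h
  letI : IsStarNormal (Matrix.toEuclideanCLM (𝕜 := ℂ) E) := ⟨heN⟩
  have hspecE : spectrum ℂ (Matrix.toEuclideanCLM (𝕜 := ℂ) E) = Set.range gC := by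
    rw [show Matrix.toEuclideanCLM (𝕜 := ℂ) E = toEucAlgEquiv N E from rfl,
      AlgEquiv.spectrum_eq, hkey]
    have h4 : V * Matrix.diagonal gC * V⁻¹
        = (hVunit.unit : Matrix (Fin N) (Fin N) ℂ) * Matrix.diagonal gC
          * ((hVunit.unit⁻¹ : (Matrix (Fin N) (Fin N) ℂ)ˣ) : Matrix (Fin N) (Fin N) ℂ) := by
      rw [Matrix.coe_units_inv, hVunit.unit_spec]
    rw [h4, spectrum.units_conjugate, spectrum_diagonal]
  have hrad : spectralRadius ℂ (Matrix.toEuclideanCLM (𝕜 := ℂ) E)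
      ≤ (ε.toNNReal : ℝ≥0∞) := by
    show (⨆ k ∈ spectrum ℂ (Matrix.toEuclideanCLM (𝕜 := ℂ) E), (‖k‖₊ : ℝ≥0∞))
      ≤ (ε.toNNReal : ℝ≥0∞)
    refine iSup₂_le fun k hk => ?_
    rw [hspecE] at hk
    obtain ⟨i, rfl⟩ := hk
    have h5 : ‖gC i‖₊ ≤ ε.toNNReal := by
      rw [← NNReal.coe_le_coe, coe_nnnorm, Real.coe_toNNReal _ hε.le]
      exact hgbound i
    exact_mod_cast h5
  rw [IsStarNormal.spectralRadius_eq_nnnorm (Matrix.toEuclideanCLM (𝕜 := ℂ) E)] at hrad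
  have h6 : ‖Matrix.toEuclideanCLM (𝕜 := ℂ) E‖₊ ≤ ε.toNNReal := by exact_mod_cast hrad
  show specNorm E ≤ ε
  calc specNorm E = ‖Matrix.toEuclideanCLM (𝕜 := ℂ) E‖ := rfl
    _ ≤ ε := by
        rw [← coe_nnnorm]
        calc ((‖Matrix.toEuclideanCLM (𝕜 := ℂ) E‖₊ : ℝ)) ≤ (ε.toNNReal : ℝ) :=
              NNReal.coe_le_coe.mpr h6
          _ = ε := Real.coe_toNNReal _ hε.le
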